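/- Let p be a prime and let (n,m,r) and (n',m',r') be triples of integers with 2 ≤ r ≤ n − 1, n − r ≤ m, 2 ≤ r' ≤ n' − 1 and n' − r' ≤ m'. If the groups G(n,m,r) and G(n',m',r') are isomorphic, then n = n', m = m' and r = r'. -/

import Mathlib

open scoped commutatorElement

/-- The relations of the presentation `⟨a, b ∣ a^(p^n) = 1, b^(p^m) = 1, [a,b] = a^(p^r)⟩`. -/
def splitRels (p n m r : ℕ) : Set (FreeGroup (Fin 2)) :=
  {FreeGroup.of (0 : Fin 2) ^ p ^ n, FreeGroup.of (1 : Fin 2) ^ p ^ m,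
    ⁅FreeGroup.of (0 : Fin 2), FreeGroup.of (1 : Fin 2)⁆ * (FreeGroup.of (0 : Fin 2) ^ p ^ r)⁻¹}

/-- The group `G(n,m,r) = ⟨a, b ∣ a^(p^n) = 1, b^(p^m) = 1, [a,b] = a^(p^r)⟩`. -/
abbrev GSplit (p n m r : ℕ) : Type := PresentedGroup (splitRels p n m r)

open Finset

namespace GSplitAux

lemma geom_sum_range_mul (c : ℤ) (A B : ℕ) :
    ∑ l ∈ range (A * B), c ^ l
      = (∑ l ∈ range A, c ^ l) * ∑ s ∈ range B, (c ^ A) ^ s := by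
  induction B with
  | zero => simp
  | succ B ih =>
    rw [Nat.mul_succ, Finset.sum_range_add, ih, Finset.sum_range_succ, mul_add]
    congr 1
    rw [Finset.sum_mul, mul_comm]
    refine Finset.sum_congr rfl fun l hl => ?_
    rw [pow_add, ← pow_mul]
    ring

lemma dvd_geom_sum_range_self (p : ℕ) (x : ℤ) (hx : (p : ℤ) ∣ x - 1) :
    (p : ℤ) ∣ ∑ l ∈ range p, x ^ l := by
  have h : ∀ l : ℕ, (p : ℤ) ∣ x ^ l - 1 := fun l => by
    have := sub_dvd_pow_sub_pow x 1 l
    simpa using hx.trans (by simpa using this)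
  have h3 : ∑ l ∈ range p, x ^ l = (∑ l ∈ range p, (x ^ l - 1)) + p := by
    rw [Finset.sum_sub_distrib]
    simp
  rw [h3]
  exact dvd_add (Finset.dvd_sum fun l _ => h l) dvd_rfl

lemma dvd_geom_sum (p : ℕ) (c : ℤ) (hc : (p : ℤ) ∣ c - 1) (K : ℕ) :
    (p : ℤ) ^ K ∣ ∑ l ∈ range (p ^ K), c ^ l := by
  induction K with
  | zero => simp
  | succ K ih =>
    have hp : p ^ (K + 1) = p ^ K * p := pow_succ p K
    rw [hp, geom_sum_range_mul, pow_succ]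
    refine mul_dvd_mul ih (dvd_geom_sum_range_self p _ ?_)
    have := sub_dvd_pow_sub_pow c 1 (p ^ K)
    simpa using hc.trans (by simpa using this)

lemma one_sub_pow_pow (p r : ℕ) (hr : 1 ≤ r) (k : ℕ) :
    (p : ℤ) ^ (r + k) ∣ (1 - (p : ℤ) ^ r) ^ p ^ k - 1 := by
  induction k with
  | zero => simpa using (dvd_neg.mpr dvd_rfl)
  | succ k ih =>
    have hw : (1 - (p : ℤ) ^ r) ^ p ^ (k + 1) - 1
        = ((1 - (p : ℤ) ^ r) ^ p ^ k) ^ p - 1 := by rw [← pow_mul, pow_succ]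
    set w := (1 - (p : ℤ) ^ r) ^ p ^ k with hwdef
    have hfac : w ^ p - 1 = (∑ l ∈ range p, w ^ l) * (w - 1) := by
      rw [geom_sum_mul]
    have hpw : (p : ℤ) ∣ w - 1 := by
      refine dvd_trans ?_ ih
      exact dvd_pow_self _ (by omega)
    have : (p:ℤ) ^ (r + (k+1)) = (p:ℤ) * (p:ℤ) ^ (r + k) := by ring
    rw [hw, hfac, this]
    exact mul_dvd_mul (dvd_geom_sum_range_self p w hpw) ih

end GSplitAux

namespace GSplitAux

variable (p n m r : ℕ)

def ga : GSplit p n m r := PresentedGroup.of 0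
def gb : GSplit p n m r := PresentedGroup.of 1

lemma mk_rel_one {w : FreeGroup (Fin 2)} (hw : w ∈ splitRels p n m r) :
    PresentedGroup.mk (splitRels p n m r) w = 1 :=
  (QuotientGroup.eq_one_iff _).mpr (Subgroup.subset_normalClosure hw)

lemma ga_pow : ga p n m r ^ p ^ n = 1 := by
  have := mk_rel_one p n m r (Or.inl rfl)
  rw [map_pow] at this
  exact this

lemma gb_pow : gb p n m r ^ p ^ m = 1 := by
  have := mk_rel_one p n m r (Or.inr (Or.inl rfl))
  rw [map_pow] at this
  exact this

lemma comm_rel : ⁅ga p n m r, gb p n m r⁆ = ga p n m r ^ p ^ r := by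
  have := mk_rel_one p n m r (Or.inr (Or.inr rfl))
  rw [map_mul, map_inv, map_pow, map_commutatorElement, mul_inv_eq_one] at this
  exact this

end GSplitAux

namespace GSplitAux

section
variable {p n m r : ℕ}

local notation "a" => ga p n m r
local notation "b" => gb p n m r

lemma zpow_rel : a ^ ((p : ℤ) ^ n) = 1 := by
  have := ga_pow p n m r
  rw [← zpow_natCast] at this
  simpa using this

lemma b_conj_a : b * a * b⁻¹ = a ^ ((1 : ℤ) - (p : ℤ) ^ r) := by
  have h := comm_rel p n m r
  rw [commutatorElement_def] at h
  have h2 : b * a * b⁻¹ * a⁻¹ = (a ^ (p ^ r))⁻¹ := by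
    rw [← h]; group
  have h3 : b * a * b⁻¹ = (a ^ (p ^ r))⁻¹ * a := by
    rw [← h2]; group
  rw [h3, ← zpow_natCast a (p ^ r), ← zpow_neg, ← zpow_add_one]
  congr 1
  push_cast
  ring

lemma b_conj_a_zpow (i : ℤ) :
    b * a ^ i * b⁻¹ = a ^ (((1 : ℤ) - (p : ℤ) ^ r) * i) := by
  rw [← conj_zpow, b_conj_a, ← zpow_mul]

end
end GSplitAux

namespace GSplitAux
section
variable {p n m r : ℕ}
local notation "a" => ga p n m r
local notation "b" => gb p n m r

lemma exists_s (hr : 1 ≤ r) :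
    ∃ s N : ℤ, (1 - (p : ℤ) ^ r) * s = 1 + N * (p : ℤ) ^ n := by
  have hcop : IsCoprime ((1 : ℤ) - (p : ℤ) ^ r) ((p : ℤ)) := by
    refine ⟨1, (p : ℤ) ^ (r - 1), ?_⟩
    have : (p : ℤ) ^ (r - 1) * (p : ℤ) = (p : ℤ) ^ r := by
      rw [← pow_succ]
      congr 1
      omega
    rw [one_mul, this]
    ring
  obtain ⟨u, v, huv⟩ := hcop.pow_right (n := n)
  exact ⟨u, -v, by linarith⟩

lemma key (hr : 1 ≤ r) (hn : 1 ≤ n) (j : ℤ) :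
    ∃ c : ℤ, (p : ℤ) ∣ c - 1 ∧ ∀ i : ℤ, b ^ j * a ^ i = a ^ (c * i) * b ^ j := by
  obtain ⟨s, N, hsN⟩ := exists_s (p := p) (n := n) hr
  set t : ℤ := 1 - (p : ℤ) ^ r with ht
  have hpt : (p : ℤ) ∣ t - 1 := by
    rw [ht]
    have : (1 : ℤ) - (p:ℤ)^r - 1 = -((p:ℤ)^r) := by ring
    rw [this]
    exact dvd_neg.mpr (dvd_pow_self _ (by omega))
  have hps : (p : ℤ) ∣ s - 1 := by
    have h1 : s - 1 = (t * s - 1) - (t - 1) * s := by ring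
    rw [h1, hsN]
    have h2 : 1 + N * (p:ℤ) ^ n - 1 = N * (p:ℤ)^n := by ring
    rw [h2]
    exact dvd_sub (Dvd.dvd.mul_left (dvd_pow_self _ (by omega)) N) (Dvd.dvd.mul_right hpt s)
  have hbconj : ∀ i : ℤ, b * a ^ i = a ^ (t * i) * b := by
    intro i
    have := b_conj_a_zpow (p := p) (n := n) (m := m) (r := r) i
    rw [← ht] at this
    calc b * a ^ i = (b * a ^ i * b⁻¹) * b := by group
    _ = a ^ (t * i) * b := by rw [this]
  have hbinv : ∀ i : ℤ, b⁻¹ * a ^ i = a ^ (s * i) * b⁻¹ := by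
    intro i
    have h1 : b * a ^ (s * i) = a ^ i * b := by
      rw [hbconj]
      have h0 : t * (s * i) = i + (p : ℤ) ^ n * (N * i) := by
        rw [← mul_assoc, hsN]; ring
      rw [h0, zpow_add, zpow_mul, zpow_rel, one_zpow, mul_one]
    calc b⁻¹ * a ^ i = b⁻¹ * (a ^ i * b) * b⁻¹ := by group
    _ = b⁻¹ * (b * a ^ (s * i)) * b⁻¹ := by rw [h1]
    _ = a ^ (s * i) * b⁻¹ := by group
  induction j using Int.induction_on with
  | zero => exact ⟨1, by simp⟩
  | succ j ih =>
    obtain ⟨c, hc1, hc2⟩ := ih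
    refine ⟨t * c, ?_, fun i => ?_⟩
    · have : t * c - 1 = (t - 1) * c + (c - 1) := by ring
      rw [this]
      exact dvd_add (hpt.mul_right c) hc1
    · have hb1 : b ^ ((j : ℤ) + 1) = b ^ (j : ℤ) * b := by
        rw [zpow_add_one]
      rw [hb1, mul_assoc, hbconj i, ← mul_assoc, hc2 (t * i), mul_assoc]
      rw [show c * (t * i) = t * c * i by ring, ← mul_assoc]
  | pred j ih =>
    obtain ⟨c, hc1, hc2⟩ := ih
    refine ⟨s * c, ?_, fun i => ?_⟩
    · have : s * c - 1 = (s - 1) * c + (c - 1) := by ring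
      rw [this]
      exact dvd_add (hps.mul_right c) hc1
    · have hb1 : b ^ (-(j : ℤ) - 1) = b ^ (-(j : ℤ)) * b⁻¹ := by
        rw [← zpow_sub_one]
      rw [hb1, mul_assoc, hbinv i, ← mul_assoc, hc2 (s * i), mul_assoc]
      rw [show c * (s * i) = s * c * i by ring, ← mul_assoc]
end
end GSplitAux

namespace GSplitAux
section
variable {p n m r : ℕ}
local notation "a" => ga p n m r
local notation "b" => gb p n m r

lemma mem_span (hr : 1 ≤ r) (hn : 1 ≤ n) (x : GSplit p n m r) :
    ∃ i j : ℤ, x = a ^ i * b ^ j := by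
  let T : Subgroup (GSplit p n m r) :=
    { carrier := {x | ∃ i j : ℤ, x = a ^ i * b ^ j}
      one_mem' := ⟨0, 0, by simp⟩
      mul_mem' := by
        rintro x y ⟨i, j, rfl⟩ ⟨k, l, rfl⟩
        obtain ⟨c, -, hc⟩ := key (p := p) (n := n) (m := m) (r := r) hr hn j
        refine ⟨i + c * k, j + l, ?_⟩
        rw [mul_assoc, ← mul_assoc (b ^ j), hc k, zpow_add, zpow_add]
        group
      inv_mem' := by
        rintro x ⟨i, j, rfl⟩
        obtain ⟨c, -, hc⟩ := key (p := p) (n := n) (m := m) (r := r) hr hn (-j)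
        refine ⟨c * (-i), -j, ?_⟩
        rw [mul_inv_rev, ← zpow_neg, ← zpow_neg, ← hc (-i)] }
  have hT : ∀ x : GSplit p n m r, x ∈ T := by
    have h1 : Subgroup.closure (Set.range (PresentedGroup.of :
        Fin 2 → GSplit p n m r)) ≤ T := by
      rw [Subgroup.closure_le]
      rintro x ⟨i, rfl⟩
      fin_cases i
      · exact ⟨1, 0, by simp [ga]⟩
      · exact ⟨0, 1, by simp [gb]⟩
    intro x
    exact h1 (by rw [PresentedGroup.closure_range_of]; trivial)
  exact hT x

lemma zpow_reduce {H : Type*} [Group H] (g : H) (k : ℕ) (hk : 0 < k) (hg : g ^ (k : ℤ) = 1)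
    (i : ℤ) : ∃ i' : ℕ, i' < k ∧ g ^ i = g ^ (i' : ℤ) := by
  refine ⟨(i % (k : ℤ)).toNat, ?_, ?_⟩
  · have h1 : i % (k : ℤ) < k := Int.emod_lt_of_pos i (by exact_mod_cast hk)
    have h2 : 0 ≤ i % (k : ℤ) := Int.emod_nonneg i (by positivity)
    omega
  · have h2 : 0 ≤ i % (k : ℤ) := Int.emod_nonneg i (by positivity)
    rw [Int.toNat_of_nonneg h2]
    conv_lhs => rw [show i = (k : ℤ) * (i / k) + i % k from (Int.mul_ediv_add_emod i k).symm]
    rw [zpow_add, zpow_mul, hg, one_zpow, one_mul]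

lemma mem_span_nat (hp : 0 < p) (hr : 1 ≤ r) (hn : 1 ≤ n) (x : GSplit p n m r) :
    ∃ i j : ℕ, i < p ^ n ∧ j < p ^ m ∧ x = a ^ (i : ℤ) * b ^ (j : ℤ) := by
  obtain ⟨i, j, rfl⟩ := mem_span (p := p) (m := m) hr hn x
  obtain ⟨i', hi', hie⟩ := zpow_reduce (ga p n m r) (p ^ n) (by positivity)
    (by rw [zpow_natCast]; exact_mod_cast ga_pow p n m r) i
  obtain ⟨j', hj', hje⟩ := zpow_reduce (gb p n m r) (p ^ m) (by positivity)
    (by rw [zpow_natCast]; exact_mod_cast gb_pow p n m r) j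
  exact ⟨i', j', hi', hj', by rw [hie, hje]⟩

lemma finite_gsplit (hp : 0 < p) (hr : 1 ≤ r) (hn : 1 ≤ n) : Finite (GSplit p n m r) := by
  refine Finite.of_surjective
    (fun z : Fin (p ^ n) × Fin (p ^ m) => a ^ (z.1 : ℤ) * b ^ (z.2 : ℤ)) ?_
  intro x
  obtain ⟨i, j, hi, hj, rfl⟩ := mem_span_nat hp hr hn x
  exact ⟨(⟨i, hi⟩, ⟨j, hj⟩), rfl⟩

lemma card_le (hp : 0 < p) (hr : 1 ≤ r) (hn : 1 ≤ n) :
    Nat.card (GSplit p n m r) ≤ p ^ n * p ^ m := by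
  have := Nat.card_le_card_of_surjective
    (fun z : Fin (p ^ n) × Fin (p ^ m) => a ^ (z.1 : ℤ) * b ^ (z.2 : ℤ)) ?_
  · simpa using this
  · intro x
    obtain ⟨i, j, hi, hj, rfl⟩ := mem_span_nat hp hr hn x
    exact ⟨(⟨i, hi⟩, ⟨j, hj⟩), rfl⟩

end
end GSplitAux

namespace GSplitAux
section
variable {p n m r : ℕ}
local notation "a" => ga p n m r
local notation "b" => gb p n m r

lemma pow_formula (i j c : ℤ) (hc : ∀ i : ℤ, b ^ j * a ^ i = a ^ (c * i) * b ^ j) :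
    ∀ N : ℕ, (a ^ i * b ^ j) ^ N
      = a ^ (i * ∑ l ∈ range N, c ^ l) * b ^ (j * N) := by
  intro N
  induction N with
  | zero => simp
  | succ N ih =>
    have hS : ∑ l ∈ range (N + 1), c ^ l = 1 + c * ∑ l ∈ range N, c ^ l := by
      rw [Finset.sum_range_succ', Finset.mul_sum]
      simp only [pow_zero, pow_succ]
      rw [add_comm]
      congr 1
      exact Finset.sum_congr rfl fun l _ => mul_comm _ _
    calc (a ^ i * b ^ j) ^ (N + 1) = (a ^ i * b ^ j) * (a ^ i * b ^ j) ^ N := pow_succ' _ _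
    _ = a ^ i * (b ^ j * a ^ (i * ∑ l ∈ range N, c ^ l)) * b ^ (j * (N : ℤ)) := by
        rw [ih]; group
    _ = a ^ i * (a ^ (c * (i * ∑ l ∈ range N, c ^ l)) * b ^ j) * b ^ (j * (N : ℤ)) := by
        rw [hc]
    _ = a ^ (i + c * (i * ∑ l ∈ range N, c ^ l)) * b ^ (j + j * (N : ℤ)) := by
        rw [zpow_add, zpow_add]; group
    _ = _ := by
        rw [hS]
        congr 1
        · congr 1
          ring
        · congr 1
          push_cast
          ring

lemma forall_pow_eq_one (hp : 0 < p) (hr : 1 ≤ r) (hn : 1 ≤ n) {K : ℕ}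
    (hK1 : n ≤ K) (hK2 : m ≤ K) (x : GSplit p n m r) : x ^ p ^ K = 1 := by
  obtain ⟨i, j, rfl⟩ := mem_span (p := p) (m := m) hr hn x
  obtain ⟨c, hc1, hc2⟩ := key (p := p) (n := n) (m := m) (r := r) hr hn j
  rw [pow_formula i j c hc2]
  have hS : ∃ q : ℤ, ∑ l ∈ range (p ^ K), c ^ l = (p : ℤ) ^ n * q := by
    obtain ⟨q, hq⟩ := (pow_dvd_pow (p : ℤ) hK1).trans (dvd_geom_sum p c hc1 K)
    exact ⟨q, hq⟩
  obtain ⟨q, hq⟩ := hS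
  have hb : ∃ q' : ℤ, j * (p ^ K : ℕ) = (p : ℤ) ^ m * q' := by
    refine ⟨j * (p : ℤ) ^ (K - m), ?_⟩
    push_cast
    rw [show (p:ℤ) ^ m * (j * (p:ℤ) ^ (K - m)) = j * ((p:ℤ) ^ m * (p:ℤ) ^ (K - m)) by ring,
      ← pow_add]
    congr 2
    omega
  obtain ⟨q', hq'⟩ := hb
  rw [hq, hq', show i * ((p:ℤ) ^ n * q) = (p:ℤ) ^ n * (i * q) by ring,
    zpow_mul, zpow_mul, zpow_rel, one_zpow]
  have : (gb p n m r : GSplit p n m r) ^ ((p : ℤ) ^ m) = 1 := by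
    have := gb_pow p n m r
    rw [← zpow_natCast] at this
    simpa using this
  rw [zpow_mul, this, one_zpow, one_zpow, one_mul]
end
end GSplitAux

namespace GSplitAux

def addAutToMulAut (A : Type*) [AddZeroClass A] : Multiplicative (AddAut A) →* MulAut (Multiplicative A) where
  toFun e := AddEquiv.toMultiplicative (Multiplicative.toAdd e)
  map_one' := by ext x; rfl
  map_mul' e₁ e₂ := by ext x; rfl

section Model
variable (p n m r : ℕ)

lemma nilpotentP (hr : 1 ≤ r) : IsNilpotent ((p : ZMod (p ^ n)) ^ r) := by
  refine ⟨n, ?_⟩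
  rw [← pow_mul]
  have : ((p : ZMod (p ^ n)) ^ (r * n)) = ((p ^ (r * n) : ℕ) : ZMod (p ^ n)) := by push_cast; rfl
  rw [this, ZMod.natCast_eq_zero_iff]
  exact pow_dvd_pow p (Nat.le_mul_of_pos_left n hr)

noncomputable def Uu (hr : 1 ≤ r) : (ZMod (p ^ n))ˣ :=
  ((nilpotentP p n r hr).isUnit_one_sub).unit

lemma Uu_val (hr : 1 ≤ r) : (Uu p n r hr : ZMod (p ^ n)) = 1 - (p : ZMod (p ^ n)) ^ r :=
  IsUnit.unit_spec _

lemma Uu_pow (hr : 1 ≤ r) (hnrm : n ≤ r + m) : Uu p n r hr ^ p ^ m = 1 := by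
  ext
  rw [Units.val_pow_eq_pow_val, Uu_val, Units.val_one]
  have h1 : ((p : ℤ) ^ n) ∣ (1 - (p : ℤ) ^ r) ^ p ^ m - 1 :=
    (pow_dvd_pow _ hnrm).trans (one_sub_pow_pow p r hr m)
  have h2 : ((((1 - (p : ℤ) ^ r) ^ p ^ m - 1 : ℤ)) : ZMod (p ^ n)) = 0 := by
    rw [ZMod.intCast_zmod_eq_zero_iff_dvd]
    push_cast
    exact h1
  push_cast at h2
  linear_combination h2

end Model
end GSplitAux

namespace GSplitAux
section Model2
variable (p n m r : ℕ)

lemma lift_cond (hr : 1 ≤ r) (hnrm : n ≤ r + m) :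
    (zmultiplesHom (Additive (ZMod (p ^ n))ˣ) (Additive.ofMul (Uu p n r hr)))
      ((p ^ m : ℕ) : ℤ) = 0 := by
  show ((p ^ m : ℕ) : ℤ) • Additive.ofMul (Uu p n r hr) = 0
  rw [← ofMul_zpow, zpow_natCast, Uu_pow p n m r hr hnrm]
  rfl

noncomputable def chi (hr : 1 ≤ r) (hnrm : n ≤ r + m) :
    Multiplicative (ZMod (p ^ m)) →* MulAut (Multiplicative (ZMod (p ^ n))) :=
  ((addAutToMulAut (ZMod (p ^ n))).comp
      (DistribMulAction.toAddAut ((ZMod (p ^ n))ˣ) (ZMod (p ^ n)))).comp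
    (AddMonoidHom.toMultiplicativeLeft
      (ZMod.lift (p ^ m)
        ⟨zmultiplesHom (Additive (ZMod (p ^ n))ˣ) (Additive.ofMul (Uu p n r hr)),
          lift_cond p n m r hr hnrm⟩))

lemma chi_eval (hr : 1 ≤ r) (hnrm : n ≤ r + m) (x : ZMod (p ^ n)) :
    chi p n m r hr hnrm (Multiplicative.ofAdd (1 : ZMod (p ^ m))) (Multiplicative.ofAdd x)
      = Multiplicative.ofAdd ((1 - (p : ZMod (p ^ n)) ^ r) * x) := by
  have h1 : (1 : ZMod (p ^ m)) = (((1 : ℤ) : ZMod (p ^ m))) := by push_cast; rfl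
  simp only [chi, MonoidHom.comp_apply]
  rw [show (AddMonoidHom.toMultiplicativeLeft
      (ZMod.lift (p ^ m)
        ⟨zmultiplesHom (Additive (ZMod (p ^ n))ˣ) (Additive.ofMul (Uu p n r hr)),
          lift_cond p n m r hr hnrm⟩)) (Multiplicative.ofAdd (1 : ZMod (p ^ m)))
      = Uu p n r hr from ?_]
  · show (addAutToMulAut _ (DistribMulAction.toAddAut _ _ (Uu p n r hr)))
      (Multiplicative.ofAdd x) = _
    show Multiplicative.ofAdd ((Uu p n r hr) • x) = _
    rw [Units.smul_def, smul_eq_mul, Uu_val]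
  · show Additive.toMul ((ZMod.lift (p ^ m)
        ⟨zmultiplesHom (Additive (ZMod (p ^ n))ˣ) (Additive.ofMul (Uu p n r hr)),
          lift_cond p n m r hr hnrm⟩) ((1 : ZMod (p ^ m)))) = Uu p n r hr
    rw [h1, ZMod.lift_coe]
    show Additive.toMul ((1 : ℤ) • Additive.ofMul (Uu p n r hr)) = Uu p n r hr
    simp

end Model2
end GSplitAux

namespace GSplitAux
section Model3
open SemidirectProduct Multiplicative
variable (p n m r : ℕ)

variable (hr : 1 ≤ r) (hnrm : n ≤ r + m)

noncomputable def fgen : Fin 2 → (Multiplicative (ZMod (p ^ n)) ⋊[chi p n m r hr hnrm]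
    Multiplicative (ZMod (p ^ m))) :=
  ![inl (ofAdd 1), inr (ofAdd 1)]

lemma inl_pow (k : ℕ) :
    (inl (ofAdd (1 : ZMod (p ^ n))) : Multiplicative (ZMod (p ^ n)) ⋊[chi p n m r hr hnrm]
      Multiplicative (ZMod (p ^ m))) ^ k = inl (ofAdd ((k : ZMod (p ^ n)))) := by
  rw [← map_pow]
  congr 1
  show ofAdd (k • (1 : ZMod (p ^ n))) = _
  congr 1
  simp

lemma inr_pow (k : ℕ) :
    (inr (ofAdd (1 : ZMod (p ^ m))) : Multiplicative (ZMod (p ^ n)) ⋊[chi p n m r hr hnrm]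
      Multiplicative (ZMod (p ^ m))) ^ k = inr (ofAdd ((k : ZMod (p ^ m)))) := by
  rw [← map_pow]
  congr 1
  show ofAdd (k • (1 : ZMod (p ^ m))) = _
  congr 1
  simp

lemma fgen0 : FreeGroup.lift (fgen p n m r hr hnrm) (FreeGroup.of 0)
    = inl (ofAdd (1 : ZMod (p ^ n))) := by
  rw [FreeGroup.lift_apply_of]
  rfl

lemma fgen1 : FreeGroup.lift (fgen p n m r hr hnrm) (FreeGroup.of 1)
    = inr (ofAdd (1 : ZMod (p ^ m))) := by
  rw [FreeGroup.lift_apply_of]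
  rfl

lemma rels_check : ∀ w ∈ splitRels p n m r,
    FreeGroup.lift (fgen p n m r hr hnrm) w = 1 := by
  rintro w (rfl | rfl | rfl)
  · rw [map_pow, fgen0, inl_pow, ZMod.natCast_self]
    rfl
  · rw [map_pow, fgen1, inr_pow, ZMod.natCast_self]
    rfl
  · rw [map_mul, map_inv, map_pow, map_commutatorElement, fgen0, fgen1, mul_inv_eq_one,
      inl_pow, commutatorElement_def]
    have h1 : (inr (ofAdd (1 : ZMod (p ^ m))) : Multiplicative (ZMod (p ^ n))
          ⋊[chi p n m r hr hnrm] Multiplicative (ZMod (p ^ m)))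
        * (inl (ofAdd (1 : ZMod (p ^ n))))⁻¹ * (inr (ofAdd (1 : ZMod (p ^ m))))⁻¹
        = inl (chi p n m r hr hnrm (ofAdd (1 : ZMod (p ^ m)))
            ((ofAdd (1 : ZMod (p ^ n)))⁻¹)) := by
      rw [inl_aut, map_inv, map_inv]
    rw [mul_assoc, mul_assoc, ← mul_assoc (inr (ofAdd (1 : ZMod (p ^ m)))), h1, ← map_mul]
    congr 1
    rw [show ((ofAdd (1 : ZMod (p ^ n)))⁻¹) = ofAdd (-1 : ZMod (p ^ n)) from rfl,
      chi_eval, ← ofAdd_add]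
    congr 1
    push_cast
    ring
end Model3
end GSplitAux

namespace GSplitAux
section Model4
open SemidirectProduct Multiplicative
variable (p n m r : ℕ) (hr : 1 ≤ r) (hnrm : n ≤ r + m)

noncomputable def phi : GSplit p n m r →*
    (Multiplicative (ZMod (p ^ n)) ⋊[chi p n m r hr hnrm] Multiplicative (ZMod (p ^ m))) :=
  PresentedGroup.toGroup (rels_check p n m r hr hnrm)

lemma phi_a : phi p n m r hr hnrm (ga p n m r) = inl (ofAdd (1 : ZMod (p ^ n))) := by
  show PresentedGroup.toGroup _ (PresentedGroup.of 0) = _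
  rw [PresentedGroup.toGroup.of]
  rfl

lemma phi_b : phi p n m r hr hnrm (gb p n m r) = inr (ofAdd (1 : ZMod (p ^ m))) := by
  show PresentedGroup.toGroup _ (PresentedGroup.of 1) = _
  rw [PresentedGroup.toGroup.of]
  rfl

lemma phi_surjective (hp : 0 < p) : Function.Surjective (phi p n m r hr hnrm) := by
  haveI : NeZero (p ^ n) := ⟨Nat.pos_iff_ne_zero.mp (by positivity)⟩
  haveI : NeZero (p ^ m) := ⟨Nat.pos_iff_ne_zero.mp (by positivity)⟩
  intro z
  refine ⟨ga p n m r ^ ((z.left.toAdd.val : ℕ)) * gb p n m r ^ ((z.right.toAdd.val : ℕ)), ?_⟩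
  rw [map_mul, map_pow, map_pow, phi_a, phi_b, inl_pow, inr_pow,
    ZMod.natCast_rightInverse _, ZMod.natCast_rightInverse _]
  show inl (ofAdd (Multiplicative.toAdd z.left)) * inr (ofAdd (Multiplicative.toAdd z.right)) = z
  exact inl_left_mul_inr_right z

end Model4
end GSplitAux

namespace GSplitAux
section Model5
open SemidirectProduct Multiplicative
variable (p n m r : ℕ) (hr : 1 ≤ r) (hnrm : n ≤ r + m)

lemma card_M :
    Nat.card (Multiplicative (ZMod (p ^ n)) ⋊[chi p n m r hr hnrm]
      Multiplicative (ZMod (p ^ m))) = p ^ n * p ^ m := by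
  have e : (Multiplicative (ZMod (p ^ n)) ⋊[chi p n m r hr hnrm]
      Multiplicative (ZMod (p ^ m))) ≃ (ZMod (p ^ n)) × (ZMod (p ^ m)) :=
    ⟨fun x => (x.left.toAdd, x.right.toAdd), fun z => ⟨ofAdd z.1, ofAdd z.2⟩,
      fun x => by cases x; rfl, fun z => rfl⟩
  rw [Nat.card_congr e, Nat.card_prod, Nat.card_zmod, Nat.card_zmod]

lemma order_phi_a :
    orderOf (phi p n m r hr hnrm (ga p n m r)) = p ^ n := by
  rw [phi_a, orderOf_injective SemidirectProduct.inl inl_injective,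
    orderOf_ofAdd_eq_addOrderOf, ZMod.addOrderOf_one]

lemma order_phi_b :
    orderOf (phi p n m r hr hnrm (gb p n m r)) = p ^ m := by
  rw [phi_b, orderOf_injective SemidirectProduct.inr inr_injective,
    orderOf_ofAdd_eq_addOrderOf, ZMod.addOrderOf_one]

end Model5
end GSplitAux

namespace GSplitAux
section Invariants
open Multiplicative
variable (p n m r : ℕ)

lemma card_gsplit (hp : p.Prime) (hr : 2 ≤ r) (hrn : r + 1 ≤ n) (hm : n - r ≤ m) :
    Nat.card (GSplit p n m r) = p ^ (n + m) := by
  have hr1 : 1 ≤ r := by omega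
  have hn1 : 1 ≤ n := by omega
  have hnrm : n ≤ r + m := by omega
  have hp0 : 0 < p := hp.pos
  haveI := finite_gsplit (p := p) (n := n) (m := m) (r := r) hp0 hr1 hn1
  refine le_antisymm ?_ ?_
  · rw [pow_add]
    exact card_le hp0 hr1 hn1
  · have h1 := Nat.card_le_card_of_surjective _ (phi_surjective p n m r hr1 hnrm hp0)
    rw [card_M, ← pow_add] at h1
    exact h1

lemma exponent_gsplit (hp : p.Prime) (hr : 2 ≤ r) (hrn : r + 1 ≤ n) (hm : n - r ≤ m) :
    Monoid.exponent (GSplit p n m r) = p ^ max n m := by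
  have hr1 : 1 ≤ r := by omega
  have hn1 : 1 ≤ n := by omega
  have hnrm : n ≤ r + m := by omega
  have hp0 : 0 < p := hp.pos
  refine Nat.dvd_antisymm ?_ ?_
  · exact Monoid.exponent_dvd_of_forall_pow_eq_one
      (forall_pow_eq_one hp0 hr1 hn1 (le_max_left n m) (le_max_right n m))
  · have ha : p ^ n ∣ Monoid.exponent (GSplit p n m r) := by
      have := order_phi_a p n m r hr1 hnrm
      calc p ^ n = orderOf (phi p n m r hr1 hnrm (ga p n m r)) := this.symm
      _ ∣ orderOf (ga p n m r) := orderOf_map_dvd _ _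
      _ ∣ _ := Monoid.order_dvd_exponent _
    have hb : p ^ m ∣ Monoid.exponent (GSplit p n m r) := by
      have := order_phi_b p n m r hr1 hnrm
      calc p ^ m = orderOf (phi p n m r hr1 hnrm (gb p n m r)) := this.symm
      _ ∣ orderOf (gb p n m r) := orderOf_map_dvd _ _
      _ ∣ _ := Monoid.order_dvd_exponent _
    rcases le_total n m with h | h
    · rw [max_eq_right h]; exact hb
    · rw [max_eq_left h]; exact ha

end Invariants
end GSplitAux

namespace GSplitAux
section Ab
open Multiplicative
variable (p n m r : ℕ)

def fab : Fin 2 → Multiplicative (ZMod (p ^ r) × ZMod (p ^ m)) :=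
  ![ofAdd (1, 0), ofAdd (0, 1)]

lemma fab_pow_1 (k : ℕ) : (ofAdd ((1 : ZMod (p ^ r)), (0 : ZMod (p ^ m)))) ^ k
    = ofAdd (((k : ZMod (p ^ r)), (0 : ZMod (p ^ m)))) := by
  rw [← ofAdd_nsmul]
  congr 1
  simp

lemma fab_pow_2 (k : ℕ) : (ofAdd ((0 : ZMod (p ^ r)), (1 : ZMod (p ^ m)))) ^ k
    = ofAdd (((0 : ZMod (p ^ r)), (k : ZMod (p ^ m)))) := by
  rw [← ofAdd_nsmul]
  congr 1
  simp

lemma fab_rels (hrn : r ≤ n) : ∀ w ∈ splitRels p n m r,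
    FreeGroup.lift (fab p m r) w = 1 := by
  rintro w (rfl | rfl | rfl)
  · rw [map_pow, FreeGroup.lift_apply_of]
    show (ofAdd ((1 : ZMod (p ^ r)), (0 : ZMod (p ^ m)))) ^ p ^ n = 1
    rw [fab_pow_1]
    have : ((p ^ n : ℕ) : ZMod (p ^ r)) = 0 :=
      (ZMod.natCast_eq_zero_iff _ _).mpr (pow_dvd_pow p hrn)
    rw [this]
    rfl
  · rw [map_pow, FreeGroup.lift_apply_of]
    show (ofAdd ((0 : ZMod (p ^ r)), (1 : ZMod (p ^ m)))) ^ p ^ m = 1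
    rw [fab_pow_2, ZMod.natCast_self]
    rfl
  · rw [map_mul, map_inv, map_pow, map_commutatorElement, FreeGroup.lift_apply_of, FreeGroup.lift_apply_of]
    show ⁅ofAdd ((1 : ZMod (p ^ r)), (0 : ZMod (p ^ m))), ofAdd (0, 1)⁆ *
      ((ofAdd ((1 : ZMod (p ^ r)), (0 : ZMod (p ^ m)))) ^ p ^ r)⁻¹ = 1
    rw [commutatorElement_eq_one_iff_mul_comm.mpr (mul_comm _ _), one_mul, inv_eq_one,
      fab_pow_1, ZMod.natCast_self]
    rfl

noncomputable def psi (hrn : r ≤ n) :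
    GSplit p n m r →* Multiplicative (ZMod (p ^ r) × ZMod (p ^ m)) :=
  PresentedGroup.toGroup (fab_rels p n m r hrn)

lemma psi_a (hrn : r ≤ n) : psi p n m r hrn (ga p n m r) = ofAdd (1, 0) := by
  show PresentedGroup.toGroup _ (PresentedGroup.of 0) = _
  rw [PresentedGroup.toGroup.of]
  rfl

lemma psi_b (hrn : r ≤ n) : psi p n m r hrn (gb p n m r) = ofAdd (0, 1) := by
  show PresentedGroup.toGroup _ (PresentedGroup.of 1) = _
  rw [PresentedGroup.toGroup.of]
  rfl

lemma psi_surjective (hp : 0 < p) (hrn : r ≤ n) : Function.Surjective (psi p n m r hrn) := by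
  haveI : NeZero (p ^ r) := ⟨Nat.pos_iff_ne_zero.mp (by positivity)⟩
  haveI : NeZero (p ^ m) := ⟨Nat.pos_iff_ne_zero.mp (by positivity)⟩
  intro z
  refine ⟨ga p n m r ^ ((z.toAdd.1.val : ℕ)) * gb p n m r ^ ((z.toAdd.2.val : ℕ)), ?_⟩
  rw [map_mul, map_pow, map_pow, psi_a, psi_b, fab_pow_1, fab_pow_2,
    ZMod.natCast_rightInverse _, ZMod.natCast_rightInverse _, ← ofAdd_add]
  show ofAdd ((z.toAdd.1 + 0), (0 + z.toAdd.2)) = z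
  rw [add_zero, zero_add]
  rfl

end Ab
end GSplitAux

namespace GSplitAux
section Ab2
open Multiplicative
variable (p n m r : ℕ)

lemma ab_of_surjective : Function.Surjective
    (Abelianization.of : GSplit p n m r →* Abelianization (GSplit p n m r)) := by
  intro x
  exact QuotientGroup.induction_on x fun g => ⟨g, rfl⟩

lemma abA_pow (hr : 1 ≤ r) (hn : 1 ≤ n) :
    (Abelianization.of (ga p n m r)) ^ p ^ r = 1 := by
  rw [← map_pow, ← comm_rel, map_commutatorElement]
  exact commutatorElement_eq_one_iff_mul_comm.mpr (mul_comm _ _)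

lemma ab_mem (hp : 0 < p) (hr : 1 ≤ r) (hn : 1 ≤ n)
    (x : Abelianization (GSplit p n m r)) :
    ∃ i j : ℕ, i < p ^ r ∧ j < p ^ m ∧
      x = (Abelianization.of (ga p n m r)) ^ i * (Abelianization.of (gb p n m r)) ^ j := by
  obtain ⟨g, rfl⟩ := ab_of_surjective p n m r x
  obtain ⟨i, j, hi, hj, rfl⟩ := mem_span_nat hp hr hn g
  rw [zpow_natCast, zpow_natCast, map_mul, map_pow, map_pow]
  refine ⟨i % p ^ r, j, Nat.mod_lt _ (by positivity), hj, ?_⟩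
  rw [pow_eq_pow_mod i (abA_pow p n m r hr hn)]

lemma finite_ab (hp : 0 < p) (hr : 1 ≤ r) (hn : 1 ≤ n) :
    Finite (Abelianization (GSplit p n m r)) := by
  refine Finite.of_surjective (fun z : Fin (p ^ r) × Fin (p ^ m) =>
    (Abelianization.of (ga p n m r)) ^ (z.1 : ℕ) *
      (Abelianization.of (gb p n m r)) ^ (z.2 : ℕ)) ?_
  intro x
  obtain ⟨i, j, hi, hj, rfl⟩ := ab_mem p n m r hp hr hn x
  exact ⟨(⟨i, hi⟩, ⟨j, hj⟩), rfl⟩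

lemma card_ab (hp : p.Prime) (hr : 2 ≤ r) (hrn : r + 1 ≤ n) (hm : n - r ≤ m) :
    Nat.card (Abelianization (GSplit p n m r)) = p ^ (r + m) := by
  have hr1 : 1 ≤ r := by omega
  have hn1 : 1 ≤ n := by omega
  have hp0 : 0 < p := hp.pos
  haveI := finite_ab p n m r hp0 hr1 hn1
  refine le_antisymm ?_ ?_
  · have h1 := Nat.card_le_card_of_surjective (fun z : Fin (p ^ r) × Fin (p ^ m) =>
      (Abelianization.of (ga p n m r)) ^ (z.1 : ℕ) *
        (Abelianization.of (gb p n m r)) ^ (z.2 : ℕ)) ?_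
    · rw [pow_add]
      simpa using h1
    · intro x
      obtain ⟨i, j, hi, hj, rfl⟩ := ab_mem p n m r hp0 hr1 hn1 x
      exact ⟨(⟨i, hi⟩, ⟨j, hj⟩), rfl⟩
  · have hsurj : Function.Surjective (Abelianization.lift (psi p n m r (by omega))) := by
      intro z
      obtain ⟨g, hg⟩ := psi_surjective p n m r hp0 (by omega) z
      exact ⟨Abelianization.of g, by rw [Abelianization.lift_apply_of, hg]⟩
    have h2 := Nat.card_le_card_of_surjective _ hsurj
    have h3 : Nat.card (Multiplicative (ZMod (p ^ r) × ZMod (p ^ m))) = p ^ (r + m) := by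
      rw [Nat.card_congr Multiplicative.toAdd, Nat.card_prod, Nat.card_zmod, Nat.card_zmod,
        pow_add]
    rw [h3] at h2
    exact h2

lemma exponent_ab (hp : p.Prime) (hr : 2 ≤ r) (hrn : r + 1 ≤ n) (hm : n - r ≤ m) :
    Monoid.exponent (Abelianization (GSplit p n m r)) = p ^ max r m := by
  have hr1 : 1 ≤ r := by omega
  have hn1 : 1 ≤ n := by omega
  have hp0 : 0 < p := hp.pos
  refine Nat.dvd_antisymm ?_ ?_
  · refine Monoid.exponent_dvd_of_forall_pow_eq_one fun x => ?_
    obtain ⟨i, j, hi, hj, rfl⟩ := ab_mem p n m r hp0 hr1 hn1 x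
    rw [mul_pow, ← pow_mul, ← pow_mul]
    have e1 : i * p ^ max r m = p ^ r * (i * p ^ (max r m - r)) := by
      rw [show p ^ r * (i * p ^ (max r m - r)) = i * (p ^ r * p ^ (max r m - r)) by ring,
        ← pow_add]
      congr 2
      omega
    have e2 : j * p ^ max r m = p ^ m * (j * p ^ (max r m - m)) := by
      rw [show p ^ m * (j * p ^ (max r m - m)) = j * (p ^ m * p ^ (max r m - m)) by ring,
        ← pow_add]
      congr 2
      omega
    have hb1 : (Abelianization.of (gb p n m r)) ^ p ^ m = 1 := by
      rw [← map_pow, gb_pow, map_one]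
    have hA : (Abelianization.of (ga p n m r)) ^ (p ^ r * (i * p ^ (max r m - r))) = 1 := by
      rw [pow_mul, abA_pow p n m r hr1 hn1, one_pow]
    have hB : (Abelianization.of (gb p n m r)) ^ (p ^ m * (j * p ^ (max r m - m))) = 1 := by
      rw [pow_mul, hb1, one_pow]
    rw [e1, e2, hA, hB, one_mul]
  · have hra : p ^ r ∣ Monoid.exponent (Abelianization (GSplit p n m r)) := by
      have h4 : ((AddMonoidHom.fst (ZMod (p ^ r)) (ZMod (p ^ m))).toMultiplicative.comp
          (Abelianization.lift (psi p n m r (by omega))))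
            (Abelianization.of (ga p n m r)) = ofAdd (1 : ZMod (p ^ r)) := by
        rw [MonoidHom.comp_apply, Abelianization.lift_apply_of, psi_a]
        rfl
      calc p ^ r = orderOf (ofAdd (1 : ZMod (p ^ r))) := by
            rw [orderOf_ofAdd_eq_addOrderOf, ZMod.addOrderOf_one]
      _ = orderOf (((AddMonoidHom.fst (ZMod (p ^ r)) (ZMod (p ^ m))).toMultiplicative.comp
          (Abelianization.lift (psi p n m r (by omega))))
            (Abelianization.of (ga p n m r))) := by rw [h4]
      _ ∣ orderOf (Abelianization.of (ga p n m r)) := orderOf_map_dvd _ _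
      _ ∣ _ := Monoid.order_dvd_exponent _
    have hmb : p ^ m ∣ Monoid.exponent (Abelianization (GSplit p n m r)) := by
      have h4 : ((AddMonoidHom.snd (ZMod (p ^ r)) (ZMod (p ^ m))).toMultiplicative.comp
          (Abelianization.lift (psi p n m r (by omega))))
            (Abelianization.of (gb p n m r)) = ofAdd (1 : ZMod (p ^ m)) := by
        rw [MonoidHom.comp_apply, Abelianization.lift_apply_of, psi_b]
        rfl
      calc p ^ m = orderOf (ofAdd (1 : ZMod (p ^ m))) := by
            rw [orderOf_ofAdd_eq_addOrderOf, ZMod.addOrderOf_one]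
      _ = orderOf (((AddMonoidHom.snd (ZMod (p ^ r)) (ZMod (p ^ m))).toMultiplicative.comp
          (Abelianization.lift (psi p n m r (by omega))))
            (Abelianization.of (gb p n m r))) := by rw [h4]
      _ ∣ orderOf (Abelianization.of (gb p n m r)) := orderOf_map_dvd _ _
      _ ∣ _ := Monoid.order_dvd_exponent _
    rcases le_total r m with h | h
    · rw [max_eq_right h]; exact hmb
    · rw [max_eq_left h]; exact hra

end Ab2
end GSplitAux

/-- The parameters `(n, m, r)` of the group `G(n,m,r)` are structural invariants:
isomorphic groups in this family have equal parameters. -/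
theorem gSplit_injective_parameters
    (p : ℕ) (hp : p.Prime) (n m r n' m' r' : ℕ)
    (hr : 2 ≤ r) (hrn : r + 1 ≤ n) (hm : n - r ≤ m)
    (hr' : 2 ≤ r') (hrn' : r' + 1 ≤ n') (hm' : n' - r' ≤ m')
    (hiso : Nonempty (GSplit p n m r ≃* GSplit p n' m' r')) :
    n = n' ∧ m = m' ∧ r = r' := by
  obtain ⟨e⟩ := hiso
  have hinj := Nat.pow_right_injective hp.two_le
  have E1 : n + m = n' + m' := by
    apply hinj
    show p ^ (n + m) = p ^ (n' + m')
    rw [← GSplitAux.card_gsplit p n m r hp hr hrn hm,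
      ← GSplitAux.card_gsplit p n' m' r' hp hr' hrn' hm']
    exact Nat.card_congr e.toEquiv
  have E2 : max n m = max n' m' := by
    apply hinj
    show p ^ (max n m) = p ^ (max n' m')
    rw [← GSplitAux.exponent_gsplit p n m r hp hr hrn hm,
      ← GSplitAux.exponent_gsplit p n' m' r' hp hr' hrn' hm']
    exact Monoid.exponent_eq_of_mulEquiv e
  have E3 : r + m = r' + m' := by
    apply hinj
    show p ^ (r + m) = p ^ (r' + m')
    rw [← GSplitAux.card_ab p n m r hp hr hrn hm,
      ← GSplitAux.card_ab p n' m' r' hp hr' hrn' hm']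
    exact Nat.card_congr e.abelianizationCongr.toEquiv
  have E4 : max r m = max r' m' := by
    apply hinj
    show p ^ (max r m) = p ^ (max r' m')
    rw [← GSplitAux.exponent_ab p n m r hp hr hrn hm,
      ← GSplitAux.exponent_ab p n' m' r' hp hr' hrn' hm']
    exact Monoid.exponent_eq_of_mulEquiv e.abelianizationCongr
  omega
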